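/- arXiv:2405.09835 — 3 statements merged into one kernel-verified Lean document; each statement's English description precedes it below -/
import Mathlib

section
/- Let u : ℝ × ℝ → ℝ be defined by u(x,t) = sin(2·arctan(exp(−t)·tan(x/2)))/sin(x). Then for every t ∈ ℝ and every x ∈ (0,π) ∪ (π,2π), u is differentiable at (x,t) and satisfies the variable-coefficient transport equation ∂_t u(x,t) + ∂_x( sin(x)·u(x,t) ) = 0; moreover u(x,0) = 1 for all x ∈ (0,π) ∪ (π,2π). -/
set_option maxHeartbeats 1000000


open Real Set

/-- u(x,t) = sin(2·arctan(exp(−t)·tan(x/2)))/sin(x) is, for every t ∈ ℝ and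
x ∈ (0,π) ∪ (π,2π), differentiable at (x,t) and satisfies the variable-coefficient
transport equation ∂_t u + ∂_x (sin(x)·u) = 0; moreover u(x,0) = 1 there. -/
theorem stmt0 (u : ℝ × ℝ → ℝ)
    (hu : ∀ p : ℝ × ℝ,
      u p = Real.sin (2 * Real.arctan (Real.exp (-p.2) * Real.tan (p.1 / 2))) / Real.sin p.1) :
    ∀ t : ℝ, ∀ x ∈ Set.Ioo (0 : ℝ) π ∪ Set.Ioo π (2 * π),
      DifferentiableAt ℝ u (x, t) ∧
      deriv (fun s : ℝ => u (x, s)) t + deriv (fun y : ℝ => Real.sin y * u (y, t)) x = 0 ∧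
      u (x, 0) = 1 := by
  intro t x hx
  have hpi := Real.pi_pos
  -- basic nonvanishing facts
  have hsin : Real.sin x ≠ 0 := by
    rcases hx with ⟨h0, h1⟩ | ⟨h0, h1⟩
    · exact ne_of_gt (Real.sin_pos_of_pos_of_lt_pi h0 h1)
    · have : Real.sin (x - π) > 0 := by
        apply Real.sin_pos_of_pos_of_lt_pi <;> nlinarith
      rw [Real.sin_sub_pi] at this
      linarith
  have hcos : Real.cos (x / 2) ≠ 0 := by
    rcases hx with ⟨h0, h1⟩ | ⟨h0, h1⟩
    · have : Real.cos (x / 2) > 0 := by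
        apply Real.cos_pos_of_mem_Ioo; constructor <;> [linarith; linarith]
      linarith
    · have : Real.cos (x / 2) < 0 := by
        apply Real.cos_neg_of_pi_div_two_lt_of_lt <;> nlinarith
      linarith
  set a : ℝ := Real.exp (-t) with ha
  set s : ℝ := Real.tan (x / 2) with hs
  have hden : (1 : ℝ) + (a * s) ^ 2 ≠ 0 := by positivity
  -- differentiability
  have hDF : DifferentiableAt ℝ
      (fun p : ℝ × ℝ =>
        Real.sin (2 * Real.arctan (Real.exp (-p.2) * Real.tan (p.1 / 2))) / Real.sin p.1)
      (x, t) := by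
    have dinner : DifferentiableAt ℝ (fun p : ℝ × ℝ => p.1 / 2) (x, t) := by fun_prop
    have d1 : DifferentiableAt ℝ (fun p : ℝ × ℝ => Real.tan (p.1 / 2)) (x, t) :=
      by have := (Real.differentiableAt_tan.mpr hcos).comp (x, t) dinner; exact this
    have d2 : DifferentiableAt ℝ (fun p : ℝ × ℝ => Real.exp (-p.2)) (x, t) :=
      by fun_prop
    have d3 : DifferentiableAt ℝ
        (fun p : ℝ × ℝ =>
          Real.sin (2 * Real.arctan (Real.exp (-p.2) * Real.tan (p.1 / 2)))) (x, t) :=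
      ((d2.mul d1).arctan.const_mul (2 : ℝ)).sin
    have dsin : DifferentiableAt ℝ (fun p : ℝ × ℝ => Real.sin p.1) (x, t) := by fun_prop
    have hsin' : (fun p : ℝ × ℝ => Real.sin p.1) (x, t) ≠ 0 := hsin
    have dinv : DifferentiableAt ℝ (fun p : ℝ × ℝ => (Real.sin p.1)⁻¹) (x, t) :=
      dsin.inv hsin'
    simpa [div_eq_mul_inv] using d3.fun_mul dinv
  have hufun : u = fun p : ℝ × ℝ =>
      Real.sin (2 * Real.arctan (Real.exp (-p.2) * Real.tan (p.1 / 2))) / Real.sin p.1 :=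
    funext hu
  refine ⟨by rw [hufun]; exact hDF, ?_, ?_⟩
  · -- t-derivative
    have h1 : HasDerivAt (fun τ : ℝ => Real.exp (-τ)) (-a) t := by
      simpa using (hasDerivAt_neg t).exp
    have h2 : HasDerivAt (fun τ : ℝ => Real.exp (-τ) * s) (-a * s) t := h1.mul_const s
    have h3 : HasDerivAt (fun τ : ℝ => Real.arctan (Real.exp (-τ) * s))
        (1 / (1 + (a * s) ^ 2) * (-a * s)) t :=
      by have := (Real.hasDerivAt_arctan (a * s)).comp t h2; exact this
    have h4 := h3.const_mul (2 : ℝ)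
    have h5 : HasDerivAt (fun τ : ℝ => Real.sin (2 * Real.arctan (Real.exp (-τ) * s)))
        (Real.cos (2 * Real.arctan (a * s)) * (2 * (1 / (1 + (a * s) ^ 2) * (-a * s)))) t :=
      by have := (Real.hasDerivAt_sin (2 * Real.arctan (a * s))).comp t h4; exact this
    have h6 := h5.div_const (Real.sin x)
    have ht : deriv (fun τ : ℝ => u (x, τ)) t =
        Real.cos (2 * Real.arctan (a * s)) * (2 * (1 / (1 + (a * s) ^ 2) * (-a * s)))
          / Real.sin x := by
      have : (fun τ : ℝ => u (x, τ)) =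
          fun τ : ℝ => Real.sin (2 * Real.arctan (Real.exp (-τ) * s)) / Real.sin x := by
        funext τ; rw [hu (x, τ)]
      rw [this]; exact h6.deriv
    -- x-derivative
    have k1 : HasDerivAt (fun y : ℝ => y / 2) (1 / 2) x := by
      simpa using (hasDerivAt_id x).div_const 2
    have k2 : HasDerivAt (fun y : ℝ => Real.tan (y / 2))
        (1 / Real.cos (x / 2) ^ 2 * (1 / 2)) x :=
      by have := (Real.hasDerivAt_tan hcos).comp x k1; exact this
    have k3 : HasDerivAt (fun y : ℝ => a * Real.tan (y / 2))
        (a * (1 / Real.cos (x / 2) ^ 2 * (1 / 2))) x := k2.const_mul a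
    have k4 : HasDerivAt (fun y : ℝ => Real.arctan (a * Real.tan (y / 2)))
        (1 / (1 + (a * s) ^ 2) * (a * (1 / Real.cos (x / 2) ^ 2 * (1 / 2)))) x :=
      by have := (Real.hasDerivAt_arctan (a * s)).comp x k3; exact this
    have k5 := k4.const_mul (2 : ℝ)
    have k6 : HasDerivAt (fun y : ℝ => Real.sin (2 * Real.arctan (a * Real.tan (y / 2))))
        (Real.cos (2 * Real.arctan (a * s)) *
          (2 * (1 / (1 + (a * s) ^ 2) * (a * (1 / Real.cos (x / 2) ^ 2 * (1 / 2)))))) x :=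
      by have := (Real.hasDerivAt_sin (2 * Real.arctan (a * s))).comp x k5; exact this
    have heq : (fun y : ℝ => Real.sin y * u (y, t)) =ᶠ[nhds x]
        (fun y : ℝ => Real.sin (2 * Real.arctan (a * Real.tan (y / 2)))) := by
      have hne : ∀ᶠ y in nhds x, Real.sin y ≠ 0 :=
        Real.continuous_sin.continuousAt.eventually_ne hsin
      filter_upwards [hne] with y hy
      rw [hu (y, t)]
      field_simp
      rw [mul_comm (Real.tan (y / 2)) a]
    have k7 : HasDerivAt (fun y : ℝ => Real.sin y * u (y, t))
        (Real.cos (2 * Real.arctan (a * s)) *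
          (2 * (1 / (1 + (a * s) ^ 2) * (a * (1 / Real.cos (x / 2) ^ 2 * (1 / 2)))))) x :=
      k6.congr_of_eventuallyEq heq
    rw [ht, k7.deriv]
    -- trigonometric identity
    have hsin2 : Real.sin x = 2 * Real.sin (x / 2) * Real.cos (x / 2) := by
      rw [show x = 2 * (x / 2) by ring, Real.sin_two_mul]
      ring_nf
    have hsinc : Real.sin (x / 2) ≠ 0 := by
      intro h; apply hsin; rw [hsin2, h]; ring
    have hstan : s = Real.sin (x / 2) / Real.cos (x / 2) := Real.tan_eq_sin_div_cos _
    rw [hsin2, hstan]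
    field_simp
    ring
  · -- initial condition
    rw [hu (x, 0)]
    simp only [neg_zero, Real.exp_zero, one_mul]
    rcases hx with ⟨h0, h1⟩ | ⟨h0, h1⟩
    · rw [Real.arctan_tan (by linarith) (by linarith)]
      rw [show 2 * (x / 2) = x by ring]
      exact div_self hsin
    · have htan : Real.tan (x / 2) = Real.tan (x / 2 - π) := by
        rw [← Real.tan_periodic (x / 2 - π)]; ring_nf
      rw [htan, Real.arctan_tan (by linarith) (by linarith)]
      have : Real.sin (2 * (x / 2 - π)) = Real.sin x := by
        rw [show 2 * (x / 2 - π) = x - 2 * π by ring, Real.sin_sub_two_pi]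
      rw [this]
      exact div_self hsin
end

section
/- Let u₀ : ℝ → ℝ be continuously differentiable with u₀ and u₀′ bounded, set m = sup_{x∈ℝ} max(0, −u₀′(x)), and let T > 0 satisfy T·m < 1. For each t ∈ [0,T) the map χ_t(x) = x + t·u₀(x) is a strictly increasing bijection from ℝ onto ℝ, and the function u(y,t) := u₀(χ_t⁻¹(y)) is a classical solution of Burgers' equation: u is differentiable on ℝ × (0,T) with ∂_t u + u·∂_x u = 0 there, and u(y,0) = u₀(y) for all y ∈ ℝ. -/
open Real Set

/-- For u₀ ∈ C¹ with u₀ and u₀′ bounded, m = sup_x max(0, −u₀′(x)), and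
T > 0 with T·m < 1: for each t ∈ [0,T) the map χ_t(x) = x + t·u₀(x) is a strictly
increasing bijection of ℝ, and u(y,t) = u₀(χ_t⁻¹(y)) is a classical solution of
Burgers' equation: differentiable on ℝ × (0,T) with ∂_t u + u·∂_x u = 0 there,
and u(y,0) = u₀(y). -/
theorem stmt5 (u₀ : ℝ → ℝ) (hC1 : ContDiff ℝ 1 u₀)
    (hbdd : ∃ C : ℝ, ∀ x : ℝ, |u₀ x| ≤ C)
    (hbdd' : ∃ C : ℝ, ∀ x : ℝ, |deriv u₀ x| ≤ C)
    (m : ℝ) (hm : m = ⨆ x : ℝ, max 0 (-(deriv u₀ x)))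
    (T : ℝ) (hT : 0 < T) (hTm : T * m < 1)
    (χ : ℝ → ℝ → ℝ) (hχ : ∀ t x : ℝ, χ t x = x + t * u₀ x)
    (u : ℝ → ℝ → ℝ) (hu : ∀ y t : ℝ, u y t = u₀ (Function.invFun (χ t) y)) :
    (∀ t ∈ Set.Ico (0 : ℝ) T, StrictMono (χ t) ∧ Function.Bijective (χ t)) ∧
    (∀ y : ℝ, ∀ t ∈ Set.Ioo (0 : ℝ) T,
      DifferentiableAt ℝ (fun p : ℝ × ℝ => u p.1 p.2) (y, t) ∧
      deriv (fun s : ℝ => u y s) t + u y t * deriv (fun z : ℝ => u z t) y = 0) ∧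
    (∀ y : ℝ, u y 0 = u₀ y) := by
  classical
  obtain ⟨C, hC⟩ := hbdd
  obtain ⟨C', hC'⟩ := hbdd'
  have hdiff : Differentiable ℝ u₀ := hC1.differentiable one_ne_zero
  have hC0 : 0 ≤ C := le_trans (abs_nonneg _) (hC 0)
  have hC'0 : 0 ≤ C' := le_trans (abs_nonneg _) (hC' 0)
  have hbd : BddAbove (Set.range fun x => max 0 (-(deriv u₀ x))) := by
    refine ⟨C', ?_⟩
    rintro _ ⟨x, rfl⟩
    exact max_le hC'0 (by linarith [(abs_le.1 (hC' x)).1])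
  have hm0 : 0 ≤ m := by
    rw [hm]
    exact le_trans (le_max_left 0 _) (le_ciSup hbd 0)
  have hmx : ∀ x, -(deriv u₀ x) ≤ m := fun x =>
    hm ▸ le_trans (le_max_right _ _) (le_ciSup hbd x)
  have hχderiv : ∀ t x : ℝ, HasDerivAt (χ t) (1 + t * deriv u₀ x) x := by
    intro t x
    have h := (hasDerivAt_id x).add (((hdiff x).hasDerivAt).const_mul t)
    have hfun : (fun x => x + t * u₀ x) = χ t := funext fun x => (hχ t x).symm
    rw [← hfun]; exact h
  have hpos : ∀ t ∈ Set.Ico (0 : ℝ) T, ∀ x : ℝ, 0 < 1 + t * deriv u₀ x := by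
    intro t ht x
    have h1 : t * m ≤ T * m := mul_le_mul_of_nonneg_right (le_of_lt ht.2) hm0
    have h2 : -(deriv u₀ x) ≤ m := hmx x
    nlinarith [mul_le_mul_of_nonneg_left h2 ht.1]
  have hcont : ∀ t : ℝ, Continuous (χ t) := by
    intro t
    have hfun : (fun x => x + t * u₀ x) = χ t := funext fun x => (hχ t x).symm
    rw [← hfun]
    exact continuous_id.add (continuous_const.mul hC1.continuous)
  have key : ∀ t ∈ Set.Ico (0 : ℝ) T, StrictMono (χ t) ∧ Function.Bijective (χ t) := by
    intro t ht
    have hmono : StrictMono (χ t) := by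
      apply strictMono_of_deriv_pos
      intro x
      rw [(hχderiv t x).deriv]
      exact hpos t ht x
    refine ⟨hmono, hmono.injective, ?_⟩
    intro y
    set a := y - t * C with ha
    set b := y + t * C with hb
    have htC : 0 ≤ t * C := mul_nonneg ht.1 hC0
    have hab : a ≤ b := by simp [ha, hb]; linarith
    have h1 : χ t a ≤ y := by
      rw [hχ]
      have := mul_le_mul_of_nonneg_left (abs_le.1 (hC a)).2 ht.1
      simp only [ha]; linarith
    have h2 : y ≤ χ t b := by
      rw [hχ]
      have := mul_le_mul_of_nonneg_left (abs_le.1 (hC b)).1 ht.1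
      simp only [hb]; linarith
    have := intermediate_value_Icc hab ((hcont t).continuousOn)
    obtain ⟨x, _, hx⟩ := this ⟨h1, h2⟩
    exact ⟨x, hx⟩
  refine ⟨key, ?_, ?_⟩
  · -- the PDE part
    intro y t ht
    have htIco : t ∈ Set.Ico (0 : ℝ) T := ⟨le_of_lt ht.1, ht.2⟩
    set x₀ := Function.invFun (χ t) y with hx₀def
    have hx₀ : χ t x₀ = y := Function.invFun_eq ((key t htIco).2.2 y)
    set d : ℝ := 1 + t * deriv u₀ x₀ with hd_def
    have hd : 0 < d := hpos t htIco x₀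
    have hd' : d ≠ 0 := ne_of_gt hd
    -- the 2D map
    set f : ℝ × ℝ → ℝ × ℝ := fun p => (p.1 + p.2 * u₀ p.1, p.2) with hf_def
    have hfa : f (x₀, t) = (y, t) := by
      simp only [hf_def]
      rw [← hχ t x₀, hx₀]
    -- the derivative as a continuous linear equiv
    set L : ℝ × ℝ →L[ℝ] ℝ × ℝ :=
      (d • ContinuousLinearMap.fst ℝ ℝ ℝ + (u₀ x₀) • ContinuousLinearMap.snd ℝ ℝ ℝ).prod
        (ContinuousLinearMap.snd ℝ ℝ ℝ) with hL_def
    set M : ℝ × ℝ →L[ℝ] ℝ × ℝ :=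
      (d⁻¹ • ContinuousLinearMap.fst ℝ ℝ ℝ - (u₀ x₀ * d⁻¹) • ContinuousLinearMap.snd ℝ ℝ ℝ).prod
        (ContinuousLinearMap.snd ℝ ℝ ℝ) with hM_def
    have hML : ∀ p : ℝ × ℝ, M (L p) = p := by
      rintro ⟨h, k⟩
      simp only [hL_def, hM_def, ContinuousLinearMap.prod_apply,
        ContinuousLinearMap.add_apply, ContinuousLinearMap.sub_apply,
        ContinuousLinearMap.smul_apply, ContinuousLinearMap.coe_fst',
        ContinuousLinearMap.coe_snd', smul_eq_mul]
      refine Prod.ext ?_ rfl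
      field_simp
      ring
    have hLM : ∀ p : ℝ × ℝ, L (M p) = p := by
      rintro ⟨h, k⟩
      simp only [hL_def, hM_def, ContinuousLinearMap.prod_apply,
        ContinuousLinearMap.add_apply, ContinuousLinearMap.sub_apply,
        ContinuousLinearMap.smul_apply, ContinuousLinearMap.coe_fst',
        ContinuousLinearMap.coe_snd', smul_eq_mul]
      refine Prod.ext ?_ rfl
      field_simp
      ring
    set e : (ℝ × ℝ) ≃L[ℝ] (ℝ × ℝ) := ContinuousLinearEquiv.equivOfInverse L M hML hLM with he_def
    -- f has strict derivative e at (x₀, t)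
    have hu₀strict : HasStrictDerivAt u₀ (deriv u₀ x₀) x₀ :=
      hC1.contDiffAt.hasStrictDerivAt one_ne_zero
    have hu₀f : HasStrictFDerivAt (fun p : ℝ × ℝ => u₀ p.1)
        ((ContinuousLinearMap.smulRight (1 : ℝ →L[ℝ] ℝ) (deriv u₀ x₀)).comp
          (ContinuousLinearMap.fst ℝ ℝ ℝ)) (x₀, t) :=
      (hasStrictDerivAt_iff_hasStrictFDerivAt.1 hu₀strict).comp (x₀, t) hasStrictFDerivAt_fst
    have hmul : HasStrictFDerivAt (fun p : ℝ × ℝ => p.2 * u₀ p.1)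
        ((t : ℝ) • ((ContinuousLinearMap.smulRight (1 : ℝ →L[ℝ] ℝ) (deriv u₀ x₀)).comp
          (ContinuousLinearMap.fst ℝ ℝ ℝ)) + (u₀ x₀) • ContinuousLinearMap.snd ℝ ℝ ℝ) (x₀, t) :=
      hasStrictFDerivAt_snd.mul hu₀f
    have htot : HasStrictFDerivAt f
        ((ContinuousLinearMap.fst ℝ ℝ ℝ +
          ((t : ℝ) • ((ContinuousLinearMap.smulRight (1 : ℝ →L[ℝ] ℝ) (deriv u₀ x₀)).comp
            (ContinuousLinearMap.fst ℝ ℝ ℝ)) + (u₀ x₀) • ContinuousLinearMap.snd ℝ ℝ ℝ)).prod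
          (ContinuousLinearMap.snd ℝ ℝ ℝ)) (x₀, t) :=
      HasStrictFDerivAt.prodMk (hasStrictFDerivAt_fst.add hmul) hasStrictFDerivAt_snd
    have heL : (e : ℝ × ℝ →L[ℝ] ℝ × ℝ) = L := rfl
    have hf : HasStrictFDerivAt f (e : ℝ × ℝ →L[ℝ] ℝ × ℝ) (x₀, t) := by
      rw [heL]
      convert htot using 1
      apply ContinuousLinearMap.ext
      rintro ⟨h, k⟩
      simp only [hL_def, ContinuousLinearMap.prod_apply, ContinuousLinearMap.add_apply,
        ContinuousLinearMap.smul_apply, ContinuousLinearMap.coe_fst',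
        ContinuousLinearMap.coe_snd', ContinuousLinearMap.coe_comp', Function.comp_apply,
        ContinuousLinearMap.smulRight_apply, ContinuousLinearMap.one_apply, smul_eq_mul]
      refine Prod.ext ?_ rfl
      simp only [hd_def]
      ring
    set linv := hf.localInverse f e (x₀, t) with hlinv_def
    have hlinva : linv (y, t) = (x₀, t) := by
      rw [← hfa]; exact hf.localInverse_apply_image
    -- eventual equality
    have hev : (fun p : ℝ × ℝ => u p.1 p.2) =ᶠ[nhds (y, t)] fun p => u₀ ((linv p).1) := by
      have h1 : ∀ᶠ p : ℝ × ℝ in nhds (y, t), f (linv p) = p := by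
        rw [← hfa]; exact hf.eventually_right_inverse
      have h2 : ∀ᶠ p : ℝ × ℝ in nhds (y, t), p.2 ∈ Set.Ioo (0 : ℝ) T := by
        have : IsOpen {p : ℝ × ℝ | p.2 ∈ Set.Ioo (0 : ℝ) T} :=
          isOpen_Ioo.preimage continuous_snd
        exact this.mem_nhds ht
      filter_upwards [h1, h2] with p hp1 hp2
      have hsnd : (linv p).2 = p.2 := by
        have h := congrArg Prod.snd hp1
        simpa [hf_def] using h
      have hfst : χ p.2 ((linv p).1) = p.1 := by
        have := congrArg Prod.fst hp1
        simp only [hf_def] at this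
        rw [hχ, ← hsnd]
        exact this
      have hIco : p.2 ∈ Set.Ico (0 : ℝ) T := ⟨le_of_lt hp2.1, hp2.2⟩
      have hinj := (key p.2 hIco).2.1
      have hsurj := (key p.2 hIco).2.2
      have : Function.invFun (χ p.2) p.1 = (linv p).1 := by
        apply hinj
        rw [Function.invFun_eq (hsurj p.1), hfst]
      rw [hu, this]
    -- derivative of the inverse-based function
    have hlinvd : HasStrictFDerivAt linv (e.symm : ℝ × ℝ →L[ℝ] ℝ × ℝ) (y, t) := by
      rw [← hfa]; exact hf.to_localInverse
    have hcomp : HasFDerivAt (fun p : ℝ × ℝ => u₀ ((linv p).1))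
        ((ContinuousLinearMap.smulRight (1 : ℝ →L[ℝ] ℝ) (deriv u₀ x₀)).comp
          ((ContinuousLinearMap.fst ℝ ℝ ℝ).comp (e.symm : ℝ × ℝ →L[ℝ] ℝ × ℝ))) (y, t) := by
      have h1 : HasFDerivAt (fun p : ℝ × ℝ => (linv p).1)
          ((ContinuousLinearMap.fst ℝ ℝ ℝ).comp (e.symm : ℝ × ℝ →L[ℝ] ℝ × ℝ)) (y, t) :=
        (hasFDerivAt_fst.comp (y, t) hlinvd.hasFDerivAt)
      have h2 : HasFDerivAt u₀
          (ContinuousLinearMap.smulRight (1 : ℝ →L[ℝ] ℝ) (deriv u₀ x₀)) ((linv (y, t)).1) := by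
        rw [hlinva]
        exact (hu₀strict.hasDerivAt).hasFDerivAt
      exact h2.comp (y, t) h1
    set G := (ContinuousLinearMap.smulRight (1 : ℝ →L[ℝ] ℝ) (deriv u₀ x₀)).comp
          ((ContinuousLinearMap.fst ℝ ℝ ℝ).comp (e.symm : ℝ × ℝ →L[ℝ] ℝ × ℝ)) with hG_def
    have hU : HasFDerivAt (fun p : ℝ × ℝ => u p.1 p.2) G (y, t) :=
      hcomp.congr_of_eventuallyEq hev
    refine ⟨hU.differentiableAt, ?_⟩
    -- partial derivatives
    have hcy : HasDerivAt (fun s : ℝ => ((y, s) : ℝ × ℝ)) ((0 : ℝ), (1 : ℝ)) t :=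
      HasDerivAt.prodMk (hasDerivAt_const t y) (hasDerivAt_id t)
    have hct : HasDerivAt (fun z : ℝ => ((z, t) : ℝ × ℝ)) ((1 : ℝ), (0 : ℝ)) y :=
      HasDerivAt.prodMk (hasDerivAt_id y) (hasDerivAt_const y t)
    have hdt : HasDerivAt (fun s : ℝ => u y s) (G (0, 1)) t := hU.comp_hasDerivAt t hcy
    have hdy : HasDerivAt (fun z : ℝ => u z t) (G (1, 0)) y := by
      have := hU.comp_hasDerivAt y hct; exact this
    rw [hdt.deriv, hdy.deriv]
    have hsymm : (e.symm : ℝ × ℝ →L[ℝ] ℝ × ℝ) = M := rfl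
    have hG01 : G (0, 1) = deriv u₀ x₀ * (-(u₀ x₀ * d⁻¹)) := by
      simp [hG_def, hsymm, hM_def, ContinuousLinearMap.prod_apply]
      ring
    have hG10 : G (1, 0) = deriv u₀ x₀ * d⁻¹ := by
      simp [hG_def, hsymm, hM_def, ContinuousLinearMap.prod_apply]
      ring
    have huyt : u y t = u₀ x₀ := by rw [hu]
    rw [hG01, hG10, huyt]
    ring
  · -- initial condition
    intro y
    have h0 : (0 : ℝ) ∈ Set.Ico (0 : ℝ) T := ⟨le_rfl, hT⟩
    have hinj := (key 0 h0).2.1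
    have hy : χ 0 y = y := by rw [hχ]; ring
    rw [hu]
    have : Function.invFun (χ 0) y = y := by
      conv_lhs => rw [← hy]
      exact Function.leftInverse_invFun hinj y
    rw [this]
end

section
/- Let T > 0 and let u : ℝ × [0,T) → ℝ be continuously differentiable and satisfy ∂_t u + u·∂_x u = 0 on ℝ × [0,T). Fix a ≤ b and set ν_l = u(a,0) and ν_r = u(b,0), and assume a + ν_l·t ≤ b + ν_r·t for all t ∈ [0,T) (the two characteristics do not cross). Then for every t ∈ [0,T), ∫_{a+ν_l t}^{b+ν_r t} u(x,t) dx = ∫_a^b u(x,0) dx + t·( ν_r²/2 − ν_l²/2 ). In particular, the Eulerian–Lagrangian update of the cell mass along exact characteristics of Burgers' equation is exact in time: the modified flux f(u) − ν·u is constant (equal to −ν²/2) along each exact characteristic, so the time evolution of the mass between two characteristics is exactly linear and the Runge–Kutta time discretization introduces no temporal error. -/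
open Real Set intervalIntegral MeasureTheory Filter Topology Asymptotics

section Stmt12Aux


variable {T : ℝ} {u : ℝ → ℝ → ℝ}

private lemma slice_hasDeriv
    (hreg : ContDiffOn ℝ 1 (fun p : ℝ × ℝ => u p.1 p.2) ((univ : Set ℝ) ×ˢ Ico (0:ℝ) T))
    {x t : ℝ} (ht : t ∈ Ico (0:ℝ) T) :
    HasDerivAt (fun y => u y t)
      ((fderivWithin ℝ (fun p : ℝ × ℝ => u p.1 p.2) ((univ : Set ℝ) ×ˢ Ico (0:ℝ) T) (x, t)) (1, 0)) x ∧
    HasDerivWithinAt (fun s => u x s)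
      ((fderivWithin ℝ (fun p : ℝ × ℝ => u p.1 p.2) ((univ : Set ℝ) ×ˢ Ico (0:ℝ) T) (x, t)) (0, 1)) (Ico (0:ℝ) T) t := by
  have hp : (x, t) ∈ (univ : Set ℝ) ×ˢ Ico (0:ℝ) T := ⟨mem_univ _, ht⟩
  have hW := ((hreg.differentiableOn one_ne_zero) _ hp).hasFDerivWithinAt
  constructor
  · have hl : HasDerivAt (fun y : ℝ => ((y, t) : ℝ × ℝ)) (1, 0) x :=
      (hasDerivAt_id x).prodMk (hasDerivAt_const x t)
    have hmaps : MapsTo (fun y : ℝ => ((y, t) : ℝ × ℝ)) univ ((univ : Set ℝ) ×ˢ Ico (0:ℝ) T) :=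
      fun y _ => ⟨mem_univ _, ht⟩
    have := hW.comp_hasDerivWithinAt x (hl.hasDerivWithinAt (s := univ)) hmaps
    rw [hasDerivWithinAt_univ] at this
    exact this
  · have hl : HasDerivAt (fun s : ℝ => ((x, s) : ℝ × ℝ)) (0, 1) t :=
      (hasDerivAt_const t x).prodMk (hasDerivAt_id t)
    have hmaps : MapsTo (fun s : ℝ => ((x, s) : ℝ × ℝ)) (Ico (0:ℝ) T) ((univ : Set ℝ) ×ˢ Ico (0:ℝ) T) :=
      fun s hs => ⟨mem_univ _, hs⟩
    exact hW.comp_hasDerivWithinAt t (hl.hasDerivWithinAt) hmaps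

private lemma uDiffS : UniqueDiffOn ℝ ((univ : Set ℝ) ×ˢ Ico (0:ℝ) T) :=
  uniqueDiffOn_univ.prod (uniqueDiffOn_Ico 0 T)

/-- the solution is constant along straight characteristics -/
private lemma char_const (hT : 0 < T)
    (hreg : ContDiffOn ℝ 1 (fun p : ℝ × ℝ => u p.1 p.2) ((univ : Set ℝ) ×ˢ Ico (0:ℝ) T))
    (hpde : ∀ x : ℝ, ∀ t ∈ Ico (0:ℝ) T,
      derivWithin (fun s : ℝ => u x s) (Ico (0:ℝ) T) t + u x t * deriv (fun y : ℝ => u y t) x = 0)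
    (c : ℝ) : ∀ t ∈ Ico (0:ℝ) T, u (c + u c 0 * t) t = u c 0 := by
  set S := (univ : Set ℝ) ×ˢ Ico (0:ℝ) T with hS
  set U := fun p : ℝ × ℝ => u p.1 p.2 with hU
  set W := fderivWithin ℝ U S with hWdef
  set ν := u c 0 with hν
  set γ : ℝ → ℝ × ℝ := fun s => (c + ν * s, s) with hγdef
  have hγ : ∀ s : ℝ, HasDerivAt γ (ν, 1) s := fun s => by
    simpa using (((hasDerivAt_id s).const_mul ν).const_add c).prodMk (hasDerivAt_id s)
  have hγcont : Continuous γ := by fun_prop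
  have hmaps : ∀ s ∈ Ico (0:ℝ) T, γ s ∈ S := fun s hs => ⟨mem_univ _, hs⟩
  -- derivative of h = U ∘ γ within Ico 0 T
  have hkey : ∀ s ∈ Ico (0:ℝ) T,
      HasDerivWithinAt (fun r => u (c + ν * r) r - ν)
        ((ν - u (c + ν * s) s) * (W (γ s) (1, 0))) (Ico (0:ℝ) T) s := by
    intro s hs
    have hp : γ s ∈ S := hmaps s hs
    have hW := ((hreg.differentiableOn one_ne_zero) _ hp).hasFDerivWithinAt
    have hcomp : HasDerivWithinAt (U ∘ γ) (W (γ s) (ν, 1)) (Ico (0:ℝ) T) s :=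
      hW.comp_hasDerivWithinAt s (hγ s).hasDerivWithinAt (fun r hr => hmaps r hr)
    have hsplit : W (γ s) (ν, 1) = ν * (W (γ s) (1, 0)) + W (γ s) (0, 1) := by
      have : ((ν, 1) : ℝ × ℝ) = ν • ((1, 0) : ℝ × ℝ) + (0, 1) := by
        simp [Prod.ext_iff]
      rw [this, map_add, ContinuousLinearMap.map_smul]
      simp
    have hx := (slice_hasDeriv hreg (x := c + ν * s) hs).1
    have ht' := (slice_hasDeriv hreg (x := c + ν * s) hs).2
    have hderivx : deriv (fun y : ℝ => u y s) (c + ν * s) = W (γ s) (1, 0) := hx.deriv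
    have hderivt : derivWithin (fun r : ℝ => u (c + ν * s) r) (Ico (0:ℝ) T) s = W (γ s) (0, 1) :=
      ht'.derivWithin ((uniqueDiffOn_Ico 0 T) s hs)
    have hpde' := hpde (c + ν * s) s hs
    rw [hderivx, hderivt] at hpde'
    have hval : W (γ s) (0, 1) = - (u (c + ν * s) s * W (γ s) (1, 0)) := by linarith
    have : HasDerivWithinAt (fun r => u (c + ν * r) r)
        ((ν - u (c + ν * s) s) * (W (γ s) (1, 0))) (Ico (0:ℝ) T) s := by
      have h2 : (U ∘ γ) = fun r => u (c + ν * r) r := rfl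
      rw [h2] at hcomp
      have : W (γ s) (ν, 1) = (ν - u (c + ν * s) s) * (W (γ s) (1, 0)) := by
        rw [hsplit, hval]; ring
      rwa [this] at hcomp
    exact this.sub_const ν
  -- continuity of the composed function on Icc
  intro t ht
  have htT : t < T := ht.2
  have hIccsub : Icc (0:ℝ) t ⊆ Ico (0:ℝ) T := fun s hs => ⟨hs.1, lt_of_le_of_lt hs.2 htT⟩
  have hcont : ContinuousOn (fun r => u (c + ν * r) r - ν) (Icc (0:ℝ) t) := by
    have : ContinuousOn (U ∘ γ) (Icc (0:ℝ) t) :=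
      (hreg.continuousOn).comp hγcont.continuousOn (fun s hs => hmaps s (hIccsub hs))
    exact this.sub continuousOn_const
  -- bound for W ∘ γ on the compact interval
  obtain ⟨K, hK⟩ : ∃ K, ∀ s ∈ Icc (0:ℝ) t, ‖W (γ s) (1, 0)‖ ≤ K := by
    have hWcont : ContinuousOn W S := hreg.continuousOn_fderivWithin uDiffS le_rfl
    have : ContinuousOn (fun s => (W (γ s)) (1, 0)) (Icc (0:ℝ) t) := by
      have h1 : ContinuousOn (fun s => W (γ s)) (Icc (0:ℝ) t) :=
        hWcont.comp hγcont.continuousOn (fun s hs => hmaps s (hIccsub hs))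
      exact h1.clm_apply continuousOn_const
    exact isCompact_Icc.exists_bound_of_continuousOn this
  -- Gronwall
  have hgron := norm_le_gronwallBound_of_norm_deriv_right_le (f := fun r => u (c + ν * r) r - ν)
    (f' := fun s => (ν - u (c + ν * s) s) * (W (γ s) (1, 0))) (δ := 0) (K := K) (ε := 0)
    (a := 0) (b := t) hcont
    (fun s hs => by
      have hsI : s ∈ Ico (0:ℝ) T := hIccsub ⟨hs.1, hs.2.le⟩
      have := hkey s hsI
      refine this.mono_of_mem_nhdsWithin ?_
      have h1 : Ici s ∩ Iio T ∈ 𝓝[Ici s] s := inter_mem_nhdsWithin _ (Iio_mem_nhds hsI.2)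
      refine Filter.mem_of_superset h1 ?_
      exact fun r hr => ⟨le_trans hsI.1 hr.1, hr.2⟩)
    (by simp [hν])
    (fun s hs => by
      have hKb := hK s ⟨hs.1, hs.2.le⟩
      have : ‖(ν - u (c + ν * s) s) * (W (γ s) (1, 0))‖
          = ‖W (γ s) (1, 0)‖ * ‖u (c + ν * s) s - ν‖ := by
        rw [norm_mul, mul_comm]
        congr 1
        rw [← norm_neg]
        congr 1; ring
      rw [this, add_zero]
      exact mul_le_mul_of_nonneg_right hKb (norm_nonneg _))
  have := hgron t ⟨ht.1, le_refl t⟩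
  rw [sub_zero, gronwallBound_ε0_δ0, norm_le_zero_iff, sub_eq_zero] at this
  exact this

private lemma mem_uIoc_abs {x c d : ℝ} (hx : x ∈ Set.uIoc c d) : |x - c| ≤ |d - c| := by
  rw [Set.mem_uIoc] at hx
  have h1 := le_abs_self (d - c)
  have h2 := neg_abs_le (d - c)
  rcases hx with ⟨ha, hb⟩ | ⟨ha, hb⟩ <;> rw [abs_le] <;> constructor <;> linarith

private lemma slice_cont
    (hreg : ContDiffOn ℝ 1 (fun p : ℝ × ℝ => u p.1 p.2) ((univ : Set ℝ) ×ˢ Ico (0:ℝ) T))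
    {t : ℝ} (ht : t ∈ Ico (0:ℝ) T) : Continuous (fun y => u y t) := by
  have : Continuous ((fun p : ℝ × ℝ => u p.1 p.2) ∘ (fun y : ℝ => ((y, t) : ℝ × ℝ))) :=
    hreg.continuousOn.comp_continuous (continuous_id.prodMk continuous_const)
      (fun y => ⟨mem_univ _, ht⟩)
  exact this

private lemma littleO_edge
    (hreg : ContDiffOn ℝ 1 (fun p : ℝ × ℝ => u p.1 p.2) ((univ : Set ℝ) ×ˢ Ico (0:ℝ) T))
    {t₀ : ℝ} (ht₀ : t₀ ∈ Ioo (0:ℝ) T) (cc ν : ℝ) :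
    (fun s => (∫ x in (cc + ν * t₀)..(cc + ν * s), u x s)
        - (s - t₀) * (ν * u (cc + ν * t₀) t₀)) =o[𝓝 t₀] (fun s => s - t₀) := by
  set c := cc + ν * t₀ with hc
  set u₀ := u c t₀ with hu₀
  rw [isLittleO_iff]
  intro ε hε
  have hν1 : (0:ℝ) < |ν| + 1 := by positivity
  set ε' := ε / (|ν| + 1) with hε'
  have hε'pos : 0 < ε' := by positivity
  -- continuity of U at (c, t₀)
  have hmemS : ((univ : Set ℝ) ×ˢ Ico (0:ℝ) T) ∈ 𝓝 ((c, t₀) : ℝ × ℝ) := by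
    have hopen : IsOpen ((univ : Set ℝ) ×ˢ Ioo (0:ℝ) T) := isOpen_univ.prod isOpen_Ioo
    exact Filter.mem_of_superset (hopen.mem_nhds ⟨mem_univ _, ht₀⟩)
      (fun p hp => ⟨mem_univ _, Ioo_subset_Ico_self hp.2⟩)
  have hcontAt : ContinuousAt (fun p : ℝ × ℝ => u p.1 p.2) (c, t₀) :=
    (hreg.continuousOn.continuousWithinAt
      (⟨mem_univ _, ⟨ht₀.1.le, ht₀.2⟩⟩ : _ ∈ (univ : Set ℝ) ×ˢ Ico (0:ℝ) T)).continuousAt hmemS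
  obtain ⟨δ, hδpos, hδ⟩ := Metric.continuousAt_iff.mp hcontAt ε' hε'pos
  -- the eventual estimate
  have hev1 : ∀ᶠ s in 𝓝 t₀, |s - t₀| < δ / (|ν| + 1) :=
    eventually_abs_sub_lt t₀ (by positivity)
  have hev2 : ∀ᶠ s in 𝓝 t₀, s ∈ Ioo (0:ℝ) T := isOpen_Ioo.eventually_mem ht₀
  filter_upwards [hev1, hev2] with s hs1 hs2
  set d := cc + ν * s with hd
  have hdc : d - c = ν * (s - t₀) := by rw [hd, hc]; ring
  have hint : IntervalIntegrable (fun x => u x s) volume c d :=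
    (slice_cont hreg (Ioo_subset_Ico_self hs2)).intervalIntegrable c d
  have h1 : (∫ x in c..d, u x s) - (s - t₀) * (ν * u₀) = ∫ x in c..d, (u x s - u₀) := by
    rw [intervalIntegral.integral_sub hint (intervalIntegrable_const), intervalIntegral.integral_const,
      smul_eq_mul, hdc]
    ring
  rw [h1]
  have hbound : ∀ x ∈ Set.uIoc c d, ‖u x s - u₀‖ ≤ ε' := by
    intro x hx
    have hxc : |x - c| ≤ |d - c| := mem_uIoc_abs hx
    have habs : |d - c| = |ν| * |s - t₀| := by rw [hdc, abs_mul]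
    have hdist : dist ((x, s) : ℝ × ℝ) (c, t₀) < δ := by
      rw [Prod.dist_eq]
      have hsd : dist s t₀ < δ := by
        rw [Real.dist_eq]
        calc |s - t₀| < δ / (|ν| + 1) := hs1
        _ ≤ δ := by
          rw [div_le_iff₀ hν1]
          nlinarith [abs_nonneg ν]
      have hxd : dist x c < δ := by
        rw [Real.dist_eq]
        calc |x - c| ≤ |ν| * |s - t₀| := habs ▸ hxc
        _ < δ := by
          have := hs1
          calc |ν| * |s - t₀| ≤ |ν| * (δ / (|ν| + 1)) :=
                mul_le_mul_of_nonneg_left this.le (abs_nonneg ν)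
            _ < δ := by
                rw [mul_div_assoc', div_lt_iff₀ hν1]
                nlinarith [abs_nonneg ν, hδpos]
      exact max_lt hxd hsd
    exact (le_of_lt (hδ hdist))
  calc ‖∫ x in c..d, (u x s - u₀)‖ ≤ ε' * |d - c| :=
        intervalIntegral.norm_integral_le_of_norm_le_const hbound
  _ = ε' * (|ν| * |s - t₀|) := by rw [hdc, abs_mul]
  _ ≤ ε * ‖s - t₀‖ := by
      rw [Real.norm_eq_abs, ← mul_assoc]
      apply mul_le_mul_of_nonneg_right _ (abs_nonneg _)
      rw [hε', div_mul_eq_mul_div, div_le_iff₀ hν1]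
      nlinarith [abs_nonneg ν, hε.le]

private lemma F_deriv_interior (hT : 0 < T)
    (hreg : ContDiffOn ℝ 1 (fun p : ℝ × ℝ => u p.1 p.2) ((univ : Set ℝ) ×ˢ Ico (0:ℝ) T))
    (hpde : ∀ x : ℝ, ∀ t ∈ Ico (0:ℝ) T,
      derivWithin (fun s : ℝ => u x s) (Ico (0:ℝ) T) t + u x t * deriv (fun y : ℝ => u y t) x = 0)
    {aa bb νl νr : ℝ}
    (hl : ∀ t ∈ Ico (0:ℝ) T, u (aa + νl * t) t = νl)
    (hr : ∀ t ∈ Ico (0:ℝ) T, u (bb + νr * t) t = νr)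
    {t₀ : ℝ} (ht₀ : t₀ ∈ Ioo (0:ℝ) T) :
    HasDerivAt (fun s => ∫ x in (aa + νl * s)..(bb + νr * s), u x s)
      (νr ^ 2 / 2 - νl ^ 2 / 2) t₀ := by
  set S := (univ : Set ℝ) ×ˢ Ico (0:ℝ) T with hSdef
  set U := fun p : ℝ × ℝ => u p.1 p.2 with hUdef
  set W := fderivWithin ℝ U S with hWdef
  have hSu : UniqueDiffOn ℝ S := uniqueDiffOn_univ.prod (uniqueDiffOn_Ico 0 T)
  have hWcont : ContinuousOn W S := hreg.continuousOn_fderivWithin hSu le_rfl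
  have ht₀I : t₀ ∈ Ico (0:ℝ) T := Ioo_subset_Ico_self ht₀
  set A := aa + νl * t₀ with hA
  set B := bb + νr * t₀ with hB
  -- choose ε with closedBall t₀ ε ⊆ Ioo 0 T
  obtain ⟨ε, εpos, hball⟩ : ∃ ε > 0, Metric.closedBall t₀ ε ⊆ Ioo (0:ℝ) T :=
    (Metric.nhds_basis_closedBall.mem_iff).mp (isOpen_Ioo.mem_nhds ht₀)
  -- uniform bound for W on a compact rectangle
  obtain ⟨M, hM⟩ : ∃ M, ∀ p ∈ uIcc A B ×ˢ Icc (t₀ - ε) (t₀ + ε), ‖W p‖ ≤ M := by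
    have hcomp : IsCompact (uIcc A B ×ˢ Icc (t₀ - ε) (t₀ + ε)) :=
      isCompact_uIcc.prod isCompact_Icc
    have hsub : uIcc A B ×ˢ Icc (t₀ - ε) (t₀ + ε) ⊆ S := by
      rintro ⟨x, s⟩ ⟨hx, hs⟩
      have : s ∈ Metric.closedBall t₀ ε := by
        rw [Metric.mem_closedBall, Real.dist_eq, abs_le]
        exact ⟨by linarith [hs.1], by linarith [hs.2]⟩
      exact ⟨mem_univ _, Ioo_subset_Ico_self (hball this)⟩
    exact hcomp.exists_bound_of_continuousOn (hWcont.mono hsub)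
  -- x-continuity of the W slices
  have hWx : ∀ t ∈ Ico (0:ℝ) T, Continuous (fun x : ℝ => W (x, t)) := by
    intro t ht
    have : Continuous (W ∘ (fun x : ℝ => ((x, t) : ℝ × ℝ))) :=
      hWcont.comp_continuous (continuous_id.prodMk continuous_const)
        (fun x => ⟨mem_univ _, ht⟩)
    exact this
  -- slice derivatives
  have hslicet : ∀ x : ℝ, ∀ s ∈ Ioo (0:ℝ) T,
      HasDerivAt (fun r => u x r) (W (x, s) (0, 1)) s := by
    intro x s hs
    have hp : (x, s) ∈ S := ⟨mem_univ _, Ioo_subset_Ico_self hs⟩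
    have hW := ((hreg.differentiableOn one_ne_zero) _ hp).hasFDerivWithinAt
    have hline : HasDerivAt (fun r : ℝ => ((x, r) : ℝ × ℝ)) (0, 1) s :=
      (hasDerivAt_const s x).prodMk (hasDerivAt_id s)
    have h1 : HasDerivWithinAt (fun r => u x r) (W (x, s) (0, 1)) (Ico (0:ℝ) T) s :=
      hW.comp_hasDerivWithinAt s hline.hasDerivWithinAt (fun r hr => ⟨mem_univ _, hr⟩)
    exact h1.hasDerivAt (Ico_mem_nhds hs.1 hs.2)
  have hslicex : ∀ x : ℝ, ∀ s ∈ Ico (0:ℝ) T,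
      HasDerivAt (fun y => u y s) (W (x, s) (1, 0)) x := by
    intro x s hs
    have hp : (x, s) ∈ S := ⟨mem_univ _, hs⟩
    have hW := ((hreg.differentiableOn one_ne_zero) _ hp).hasFDerivWithinAt
    have hline : HasDerivAt (fun y : ℝ => ((y, s) : ℝ × ℝ)) (1, 0) x :=
      (hasDerivAt_id x).prodMk (hasDerivAt_const x s)
    have h1 := hW.comp_hasDerivWithinAt x (hline.hasDerivWithinAt (s := univ))
      (fun y _ => (⟨mem_univ _, hs⟩ : ((y, s) : ℝ × ℝ) ∈ S))
    rw [hasDerivWithinAt_univ] at h1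
    exact h1
  -- the fixed-boundary parametric derivative
  have hC : HasDerivAt (fun s => ∫ x in A..B, u x s) (∫ x in A..B, W (x, t₀) (0, 1)) t₀ := by
    have := (intervalIntegral.hasDerivAt_integral_of_dominated_loc_of_deriv_le
      (F := fun s x => u x s) (F' := fun s x => W (x, s) (0, 1)) (x₀ := t₀)
      (a := A) (b := B) (bound := fun _ => M) (μ := volume) (Metric.ball_mem_nhds _ εpos)
      ?_ ?_ ?_ ?_ ?_ ?_).2
    · exact this
    · filter_upwards [isOpen_Ioo.eventually_mem ht₀] with s hs
      exact ((slice_cont hreg (Ioo_subset_Ico_self hs)).aestronglyMeasurable).restrict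
    · exact (slice_cont hreg ht₀I).intervalIntegrable A B
    · exact (((hWx t₀ ht₀I).clm_apply continuous_const).aestronglyMeasurable).restrict
    · apply Eventually.of_forall
      intro x hx s hs
      have hxI : x ∈ uIcc A B := uIoc_subset_uIcc hx
      have hsI : s ∈ Icc (t₀ - ε) (t₀ + ε) := by
        have := Metric.ball_subset_closedBall hs
        rw [Metric.mem_closedBall, Real.dist_eq, abs_le] at this
        exact ⟨by linarith [this.1], by linarith [this.2]⟩
      calc ‖W (x, s) (0, 1)‖ ≤ ‖W (x, s)‖ * ‖((0:ℝ), (1:ℝ))‖ :=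
            ContinuousLinearMap.le_opNorm _ _
      _ ≤ M := by
          have h01 : ‖((0:ℝ), (1:ℝ))‖ = 1 := by
            simp [Prod.norm_def]
          rw [h01, mul_one]
          exact hM _ ⟨hxI, hsI⟩
    · exact intervalIntegrable_const
    · apply Eventually.of_forall
      intro x hx s hs
      exact hslicet x s (hball (Metric.ball_subset_closedBall hs))
  -- value of the parametric integral derivative
  have hIval : (∫ x in A..B, W (x, t₀) (0, 1)) = -(νr ^ 2 / 2 - νl ^ 2 / 2) := by
    have hptw : ∀ x : ℝ, W (x, t₀) (0, 1) = -(u x t₀ * W (x, t₀) (1, 0)) := by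
      intro x
      have hp : (x, t₀) ∈ S := ⟨mem_univ _, ht₀I⟩
      have hW := ((hreg.differentiableOn one_ne_zero) _ hp).hasFDerivWithinAt
      have hline : HasDerivAt (fun r : ℝ => ((x, r) : ℝ × ℝ)) (0, 1) t₀ :=
        (hasDerivAt_const t₀ x).prodMk (hasDerivAt_id t₀)
      have h1 : HasDerivWithinAt (fun r => u x r) (W (x, t₀) (0, 1)) (Ico (0:ℝ) T) t₀ :=
        hW.comp_hasDerivWithinAt t₀ hline.hasDerivWithinAt (fun r hr => ⟨mem_univ _, hr⟩)
      have hd1 : derivWithin (fun r => u x r) (Ico (0:ℝ) T) t₀ = W (x, t₀) (0, 1) :=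
        h1.derivWithin ((uniqueDiffOn_Ico 0 T) t₀ ht₀I)
      have hd2 : deriv (fun y => u y t₀) x = W (x, t₀) (1, 0) := (hslicex x t₀ ht₀I).deriv
      have := hpde x t₀ ht₀I
      rw [hd1, hd2] at this
      linarith
    have h2 : (∫ x in A..B, W (x, t₀) (0, 1)) = -∫ x in A..B, u x t₀ * W (x, t₀) (1, 0) := by
      rw [← intervalIntegral.integral_neg]
      congr 1
      ext x
      rw [hptw x]
    rw [h2]
    have hFTC : (∫ x in A..B, u x t₀ * W (x, t₀) (1, 0))
        = (u B t₀) ^ 2 / 2 - (u A t₀) ^ 2 / 2 := by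
      apply intervalIntegral.integral_eq_sub_of_hasDerivAt (f := fun x => u x t₀ ^ 2 / 2)
      · intro x hx
        have hx1 := hslicex x t₀ ht₀I
        have h3 := (hx1.mul hx1).div_const 2
        have h4 := h3.congr_deriv (show _ = u x t₀ * W (x, t₀) (1, 0) by ring)
        refine h4.congr_of_eventuallyEq (Filter.Eventually.of_forall fun y => ?_)
        simp only [Pi.mul_apply]; ring
      · exact ((slice_cont hreg ht₀I).mul ((hWx t₀ ht₀I).clm_apply continuous_const)).intervalIntegrable A B
    rw [hFTC, hr t₀ ht₀I, hl t₀ ht₀I]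
  -- assembly of the derivative via little-o decomposition
  have hA' := littleO_edge hreg ht₀ aa νl
  have hB' := littleO_edge hreg ht₀ bb νr
  rw [hl t₀ ht₀I] at hA'
  rw [hr t₀ ht₀I] at hB'
  rw [← hA] at hA'
  rw [← hB] at hB'
  have hCo := hasDerivAt_iff_isLittleO.mp hC
  rw [hasDerivAt_iff_isLittleO]
  have heq : (fun s => (∫ x in (aa + νl * s)..(bb + νr * s), u x s)
      - (∫ x in A..B, u x t₀) - (s - t₀) • (νr ^ 2 / 2 - νl ^ 2 / 2))
      =ᶠ[𝓝 t₀] fun s =>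
        ((((∫ x in B..(bb + νr * s), u x s) - (s - t₀) * (νr * νr))
        - ((∫ x in A..(aa + νl * s), u x s) - (s - t₀) * (νl * νl)))
        + ((∫ x in A..B, u x s) - (∫ x in A..B, u x t₀)
            - (s - t₀) • (∫ x in A..B, W (x, t₀) (0, 1)))) := by
    filter_upwards [isOpen_Ioo.eventually_mem ht₀] with s hs
    have hsI : s ∈ Ico (0:ℝ) T := Ioo_subset_Ico_self hs
    have hint : ∀ c d : ℝ, IntervalIntegrable (fun x => u x s) volume c d :=
      fun c d => (slice_cont hreg hsI).intervalIntegrable c d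
    have h1 : (∫ x in (aa + νl * s)..A, u x s) + (∫ x in A..(bb + νr * s), u x s)
        = ∫ x in (aa + νl * s)..(bb + νr * s), u x s :=
      intervalIntegral.integral_add_adjacent_intervals (hint _ _) (hint _ _)
    have h2 : (∫ x in A..B, u x s) + (∫ x in B..(bb + νr * s), u x s)
        = ∫ x in A..(bb + νr * s), u x s :=
      intervalIntegral.integral_add_adjacent_intervals (hint _ _) (hint _ _)
    have h3 : (∫ x in (aa + νl * s)..A, u x s) = - ∫ x in A..(aa + νl * s), u x s :=
      intervalIntegral.integral_symm _ _
    rw [hIval, ← h1, ← h2, h3]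
    simp only [smul_eq_mul]
    ring
  exact heq.trans_isLittleO ((hB'.sub hA').add hCo)

/-- For a C¹ solution of Burgers' equation on ℝ × [0,T), with a ≤ b,
ν_l = u(a,0), ν_r = u(b,0), and non-crossing characteristics a + ν_l t ≤ b + ν_r t on
[0,T), the mass between the two exact characteristics evolves exactly linearly in time:
∫_{a+ν_l t}^{b+ν_r t} u(x,t) dx = ∫_a^b u(x,0) dx + t·(ν_r²/2 − ν_l²/2). -/
theorem stmt12 (T : ℝ) (hT : 0 < T) (u : ℝ → ℝ → ℝ)
    (hreg : ContDiffOn ℝ 1 (fun p : ℝ × ℝ => u p.1 p.2)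
      ((Set.univ : Set ℝ) ×ˢ Set.Ico (0 : ℝ) T))
    (hpde : ∀ x : ℝ, ∀ t ∈ Set.Ico (0 : ℝ) T,
      derivWithin (fun s : ℝ => u x s) (Set.Ico (0 : ℝ) T) t
        + u x t * deriv (fun y : ℝ => u y t) x = 0)
    (a b : ℝ) (hab : a ≤ b) (νl νr : ℝ) (hνl : νl = u a 0) (hνr : νr = u b 0)
    (hnocross : ∀ t ∈ Set.Ico (0 : ℝ) T, a + νl * t ≤ b + νr * t) :
    ∀ t ∈ Set.Ico (0 : ℝ) T,
      (∫ x in (a + νl * t)..(b + νr * t), u x t)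
        = (∫ x in a..b, u x 0) + t * (νr ^ 2 / 2 - νl ^ 2 / 2) := by
  intro t ht
  have hl' : ∀ s ∈ Ico (0:ℝ) T, u (a + νl * s) s = νl := by
    have := char_const hT hreg hpde a
    rw [← hνl] at this
    exact this
  have hr' : ∀ s ∈ Ico (0:ℝ) T, u (b + νr * s) s = νr := by
    have := char_const hT hreg hpde b
    rw [← hνr] at this
    exact this
  rcases eq_or_lt_of_le ht.1 with h0 | h0
  · rw [← h0]
    norm_num
  · have htT : t < T := ht.2
    set c := νr ^ 2 / 2 - νl ^ 2 / 2 with hc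
    set F := fun s => ∫ x in (a + νl * s)..(b + νr * s), u x s with hF
    have hderiv : ∀ s ∈ Ioo (0:ℝ) T, HasDerivAt F c s := fun s hs =>
      F_deriv_interior hT hreg hpde hl' hr' hs
    -- continuity of F on Icc 0 t
    set proj : ℝ → ℝ := fun s => max 0 (min s t) with hproj
    have hprojmem : ∀ s, proj s ∈ Ico (0:ℝ) T := fun s =>
      ⟨le_max_left _ _, lt_of_le_of_lt (max_le ht.1 (min_le_right s t)) htT⟩
    have hUt : Continuous (fun q : ℝ × ℝ => u q.2 (proj q.1)) := by
      have : Continuous ((fun p : ℝ × ℝ => u p.1 p.2)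
          ∘ (fun q : ℝ × ℝ => ((q.2, proj q.1) : ℝ × ℝ))) :=
        hreg.continuousOn.comp_continuous (by fun_prop) (fun q => ⟨mem_univ _, hprojmem _⟩)
      exact this
    have hH1 : Continuous (fun s => ∫ x in a..(b + νr * s), u x (proj s)) :=
      intervalIntegral.continuous_parametric_intervalIntegral_of_continuous (μ := volume)
        (f := fun s x => u x (proj s)) (a₀ := a) hUt (by fun_prop)
    have hH2 : Continuous (fun s => ∫ x in a..(a + νl * s), u x (proj s)) :=
      intervalIntegral.continuous_parametric_intervalIntegral_of_continuous (μ := volume)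
        (f := fun s x => u x (proj s)) (a₀ := a) hUt (by fun_prop)
    have hFcont : ContinuousOn F (Icc 0 t) := by
      apply ((hH1.sub hH2).continuousOn (s := Icc 0 t)).congr
      intro s hs
      have hps : proj s = s := by
        rw [hproj]
        simp only []
        rw [min_eq_left hs.2, max_eq_right hs.1]
      have hsI : s ∈ Ico (0:ℝ) T := ⟨hs.1, lt_of_le_of_lt hs.2 htT⟩
      have hint : ∀ cc d : ℝ, IntervalIntegrable (fun x => u x s) volume cc d :=
        fun cc d => (slice_cont hreg hsI).intervalIntegrable cc d
      rw [hF]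
      simp only [hps, Pi.sub_apply]
      rw [intervalIntegral.integral_interval_sub_left (hint _ _) (hint _ _)]
    -- monotonicity trick
    set g := fun s => F s - s * c with hg
    have hgc : ContinuousOn g (Icc 0 t) :=
      hFcont.sub (continuousOn_id.mul continuousOn_const)
    have hder : ∀ s ∈ interior (Icc (0:ℝ) t), HasDerivAt g 0 s := by
      intro s hs
      rw [interior_Icc] at hs
      have hsIoo : s ∈ Ioo (0:ℝ) T := ⟨hs.1, hs.2.trans htT⟩
      have h := (hderiv s hsIoo).sub (hasDerivAt_mul_const c)
      rw [sub_self] at h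
      exact h
    have hdiffg : DifferentiableOn ℝ g (interior (Icc (0:ℝ) t)) :=
      fun s hs => ((hder s hs).differentiableAt).differentiableWithinAt
    have hmono : MonotoneOn g (Icc (0:ℝ) t) :=
      monotoneOn_of_deriv_nonneg (convex_Icc 0 t) hgc hdiffg
        (fun s hs => le_of_eq (hder s hs).deriv.symm)
    have hanti : AntitoneOn g (Icc (0:ℝ) t) :=
      antitoneOn_of_deriv_nonpos (convex_Icc 0 t) hgc hdiffg
        (fun s hs => le_of_eq (hder s hs).deriv)
    have h0m : (0:ℝ) ∈ Icc (0:ℝ) t := ⟨le_refl 0, h0.le⟩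
    have htm : t ∈ Icc (0:ℝ) t := ⟨h0.le, le_refl t⟩
    have hgeq : g t = g 0 :=
      le_antisymm (hanti h0m htm h0.le) (hmono h0m htm h0.le)
    have hF0 : F 0 = ∫ x in a..b, u x 0 := by
      rw [hF]; norm_num
    have hFt : F t = ∫ x in (a + νl * t)..(b + νr * t), u x t := rfl
    have : F t - t * c = F 0 - 0 * c := by
      rw [hg] at hgeq
      simpa using hgeq
    rw [hFt, hF0] at this
    linarith

end Stmt12Aux
end
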